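/- For any subcubic planar graph G, the clique number of the exact square of G is at most 4; that is, ω^{[#2]}(G) ≤ 4. -/

import Mathlib

/-- The exact square of a graph `G`: two distinct vertices are adjacent iff
their distance in `G` is exactly `2`. -/
def exactSquare {V : Type*} (G : SimpleGraph V) : SimpleGraph V where
  Adj u v := G.dist u v = 2
  symm := ⟨fun _ _ h => SimpleGraph.dist_comm.trans h⟩
  loopless := ⟨fun v h => by simp [SimpleGraph.dist_self] at h⟩

/-- `G` has `H` as a minor: there is a family of nonempty, pairwise disjoint,
connected branch sets in `G`, one for each vertex of `H`, such that every edge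
of `H` is realized by an edge of `G` between the corresponding branch sets. -/
def HasMinor {V W : Type*} (G : SimpleGraph V) (H : SimpleGraph W) : Prop :=
  ∃ B : W → Set V,
    (∀ w, (B w).Nonempty) ∧
    (∀ w, (G.induce (B w)).Connected) ∧
    (Pairwise fun w w' => Disjoint (B w) (B w')) ∧
    ∀ ⦃w w'⦄, H.Adj w w' → ∃ u ∈ B w, ∃ v ∈ B w', G.Adj u v

/-- Planarity, via Wagner's theorem: a graph is planar iff it has neither a
`K₅` minor nor a `K₃,₃` minor. -/
def IsPlanar {V : Type*} (G : SimpleGraph V) : Prop :=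
  ¬ HasMinor G (SimpleGraph.completeGraph (Fin 5)) ∧
    ¬ HasMinor G (completeBipartiteGraph (Fin 3) (Fin 3))


lemma star_connected {V : Type*} (G : SimpleGraph V) (c : V) (s : Set V)
    (h : ∀ x ∈ s, G.Adj c x) : (G.induce (insert c s)).Connected := by
  rw [SimpleGraph.connected_iff]
  refine ⟨?_, ⟨⟨c, Set.mem_insert _ _⟩⟩⟩
  have key : ∀ z : ↥(insert c s), (G.induce (insert c s)).Reachable z ⟨c, Set.mem_insert _ _⟩ := by
    rintro ⟨z, hz | hz⟩
    · subst hz; rfl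
    · refine SimpleGraph.Adj.reachable ?_
      simp only [SimpleGraph.comap_adj, Function.Embedding.coe_subtype]
      exact (h z hz).symm
  intro x y
  exact (key x).trans (key y).symm

lemma hasMinor_of_stars {V W : Type*} (G : SimpleGraph V) (H : SimpleGraph W)
    (c : W → V) (F : W → Set V)
    (hc : ∀ w, ∀ x ∈ F w, G.Adj (c w) x)
    (hdisj : Pairwise fun w w' => Disjoint (insert (c w) (F w)) (insert (c w') (F w')))
    (hadj : ∀ ⦃w w'⦄, H.Adj w w' →
      ∃ u ∈ insert (c w) (F w), ∃ x ∈ insert (c w') (F w'), G.Adj u x) :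
    HasMinor G H :=
  ⟨fun w => insert (c w) (F w), fun w => ⟨c w, Set.mem_insert _ _⟩,
    fun w => star_connected G (c w) (F w) (hc w), hdisj, hadj⟩

lemma walk_two {V : Type*} (G : SimpleGraph V) {x y : V} (p : G.Walk x y)
    (hp : p.length = 2) : ∃ m, G.Adj m x ∧ G.Adj m y := by
  cases p with
  | nil => simp at hp
  | cons h q =>
    cases q with
    | nil => simp at hp
    | cons h' q' =>
      cases q' with
      | nil => exact ⟨_, h.symm, h'⟩
      | cons h'' q'' => simp [SimpleGraph.Walk.length_cons] at hp

/-- For any subcubic planar graph `G`, the clique number of the exact square of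
`G` is at most `4`, i.e. the exact square has no clique on `5` vertices. -/
theorem exactSquare_cliqueFree_five {V : Type*} [Fintype V]
    (G : SimpleGraph V) (hplanar : IsPlanar G)
    (hdeg : ∀ v : V, (G.neighborSet v).ncard ≤ 3) :
    (exactSquare G).CliqueFree 5 := by
  classical
  intro s hs
  obtain ⟨hclique, hcard⟩ := hs
  set v : Fin 5 → V := fun i => (s.equivFin.symm (Fin.cast hcard.symm i) : V) with hvdef
  have hmem : ∀ i, v i ∈ s := fun i => (s.equivFin.symm (Fin.cast hcard.symm i)).2
  have hv : Function.Injective v := by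
    intro i j hij
    have := s.equivFin.symm.injective (Subtype.ext hij)
    simpa [Fin.ext_iff] using congrArg Fin.val this
  have hdist : ∀ i j, i ≠ j → G.dist (v i) (v j) = 2 := by
    intro i j hij
    exact hclique (hmem i) (hmem j) (fun h => hij (hv h))
  have hind : ∀ i j, i ≠ j → ¬ G.Adj (v i) (v j) := by
    intro i j hij hadj
    have h1 : G.dist (v i) (v j) = 1 := SimpleGraph.dist_eq_one_iff_adj.mpr hadj
    rw [hdist i j hij] at h1; exact (by norm_num : (2:ℕ) ≠ 1) h1
  have hmid : ∀ i j, i ≠ j → ∃ m, G.Adj m (v i) ∧ G.Adj m (v j) := by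
    intro i j hij
    have hd := hdist i j hij
    obtain ⟨p, hp⟩ := SimpleGraph.exists_walk_of_dist_ne_zero (by rw [hd]; norm_num)
    rw [hd] at hp
    exact walk_two G p hp
  have hdeg4 : ∀ z a b c d : V, G.Adj z a → G.Adj z b → G.Adj z c → G.Adj z d →
      a ≠ b → a ≠ c → a ≠ d → b ≠ c → b ≠ d → c ≠ d → False := by
    intro z a b c d h1 h2 h3 h4 hab hac had hbc hbd hcd
    have hsub : ({a, b, c, d} : Finset V) ⊆ G.neighborFinset z := by
      intro x hx
      simp only [Finset.mem_insert, Finset.mem_singleton] at hx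
      rw [SimpleGraph.mem_neighborFinset]
      rcases hx with rfl | rfl | rfl | rfl <;> assumption
    have hc4 : ({a, b, c, d} : Finset V).card = 4 := by
      rw [Finset.card_insert_of_notMem (by simp [hab, hac, had]),
        Finset.card_insert_of_notMem (by simp [hbc, hbd]),
        Finset.card_insert_of_notMem (by simp [hcd]), Finset.card_singleton]
    have h5 := Finset.card_le_card hsub
    rw [hc4] at h5
    have h6 : (G.neighborFinset z).card = (G.neighborSet z).ncard := by
      rw [SimpleGraph.neighborFinset_def, Set.ncard_eq_toFinset_card']
    rw [h6] at h5
    have := hdeg z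
    omega
  have hnr : ∀ m (i : Fin 5), G.Adj m (v i) → ∀ x, m ≠ v x := by
    intro m i hm x hx
    subst hx
    by_cases hxi : x = i
    · subst hxi; exact G.irrefl hm
    · exact hind x i hxi hm
  by_cases htri : ∃ (z : V) (a b c : Fin 5), a ≠ b ∧ a ≠ c ∧ b ≠ c ∧
      G.Adj z (v a) ∧ G.Adj z (v b) ∧ G.Adj z (v c)
  · obtain ⟨z, a, b, c, hab, hac, hbc, hza, hzb, hzc⟩ := htri
    exfalso; apply hplanar.2
    have hvne : ∀ i j : Fin 5, i ≠ j → v i ≠ v j := fun i j hij h => hij (hv h)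
    -- find the two remaining indices l, l'
    have hcompl : 1 < ({a, b, c}ᶜ : Finset (Fin 5)).card := by
      rw [Finset.card_compl]
      have h3 : ({a, b, c} : Finset (Fin 5)).card = 3 := by
        rw [Finset.card_insert_of_notMem (by simp [hab, hac]),
          Finset.card_insert_of_notMem (by simp [hbc]), Finset.card_singleton]
      rw [h3]
      simp
    obtain ⟨l, hl, l', hl', hll'⟩ := Finset.one_lt_card.mp hcompl
    simp only [Finset.mem_compl, Finset.mem_insert, Finset.mem_singleton, not_or] at hl hl'
    obtain ⟨hla, hlb, hlc⟩ := hl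
    obtain ⟨hl'a, hl'b, hl'c⟩ := hl'
    have hzl : ¬ G.Adj z (v l) := fun h => hdeg4 z (v a) (v b) (v c) (v l) hza hzb hzc h
      (hvne a b hab) (hvne a c hac) (hvne a l (Ne.symm hla)) (hvne b c hbc)
      (hvne b l (Ne.symm hlb)) (hvne c l (Ne.symm hlc))
    have hzl' : ¬ G.Adj z (v l') := fun h => hdeg4 z (v a) (v b) (v c) (v l') hza hzb hzc h
      (hvne a b hab) (hvne a c hac) (hvne a l' (Ne.symm hl'a)) (hvne b c hbc)
      (hvne b l' (Ne.symm hl'b)) (hvne c l' (Ne.symm hl'c))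
    have hznr : ∀ x, z ≠ v x := hnr z a hza
    set M : Fin 5 → Set V := fun x =>
      {t | G.Adj t (v x) ∧ G.Adj t (v l) ∧ G.Adj t (v l')} with hM
    set A : Set V := {t | G.Adj t (v l) ∧ ¬ G.Adj t (v l') ∧
      (G.Adj t (v a) ∨ G.Adj t (v b) ∨ G.Adj t (v c))} with hA
    set B : Set V := {t | G.Adj t (v l') ∧ ¬ G.Adj t (v l) ∧
      (G.Adj t (v a) ∨ G.Adj t (v b) ∨ G.Adj t (v c))} with hB
    -- membership consequences
    have hMnr : ∀ x t, t ∈ M x → ∀ y, t ≠ v y := fun x t ht => hnr t l ht.2.1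
    have hAnr : ∀ t, t ∈ A → ∀ y, t ≠ v y := fun t ht => hnr t l ht.1
    have hBnr : ∀ t, t ∈ B → ∀ y, t ≠ v y := fun t ht => hnr t l' ht.1
    have hMM : ∀ x y : Fin 5, x ≠ y → x ≠ l → x ≠ l' → y ≠ l → y ≠ l' →
        ∀ t, t ∈ M x → t ∈ M y → False := by
      intro x y hxy hxl hxl' hyl hyl' t ht ht'
      exact hdeg4 t (v x) (v y) (v l) (v l') ht.1 ht'.1 ht.2.1 ht.2.2
        (hvne x y hxy) (hvne x l hxl) (hvne x l' hxl') (hvne y l hyl) (hvne y l' hyl')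
        (hvne l l' hll')
    have hzM : ∀ x, z ∉ M x := fun x h => hzl h.2.1
    have hzA : z ∉ A := fun h => hzl h.1
    have hzB : z ∉ B := fun h => hzl' h.1
    have hMA : ∀ x t, t ∈ M x → t ∈ A → False := fun x t ht ht' => ht'.2.1 ht.2.2
    have hMB : ∀ x t, t ∈ M x → t ∈ B → False := fun x t ht ht' => ht'.2.1 ht.2.1
    have hAB : ∀ t, t ∈ A → t ∈ B → False := fun t ht ht' => ht.2.1 ht'.1
    -- edge lemmas
    have edgeR1 : ∀ x : Fin 5, l ≠ x → l' ≠ x → (x = a ∨ x = b ∨ x = c) →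
        ∃ u ∈ insert (v x) (M x), ∃ y ∈ insert (v l) A, G.Adj u y := by
      intro x hxl hxl' hxabc
      obtain ⟨m, hml, hmx⟩ := hmid l x hxl
      by_cases hm : G.Adj m (v l')
      · exact ⟨m, Set.mem_insert_iff.mpr (Or.inr ⟨hmx, hml, hm⟩),
          v l, Set.mem_insert _ _, hml⟩
      · refine ⟨v x, Set.mem_insert _ _, m, Set.mem_insert_iff.mpr (Or.inr ⟨hml, hm, ?_⟩),
          hmx.symm⟩
        rcases hxabc with rfl | rfl | rfl
        · exact Or.inl hmx
        · exact Or.inr (Or.inl hmx)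
        · exact Or.inr (Or.inr hmx)
    have edgeR2 : ∀ x : Fin 5, l ≠ x → l' ≠ x → (x = a ∨ x = b ∨ x = c) →
        ∃ u ∈ insert (v x) (M x), ∃ y ∈ insert (v l') B, G.Adj u y := by
      intro x hxl hxl' hxabc
      obtain ⟨m, hml', hmx⟩ := hmid l' x hxl'
      by_cases hm : G.Adj m (v l)
      · exact ⟨m, Set.mem_insert_iff.mpr (Or.inr ⟨hmx, hm, hml'⟩),
          v l', Set.mem_insert _ _, hml'⟩
      · refine ⟨v x, Set.mem_insert _ _, m, Set.mem_insert_iff.mpr (Or.inr ⟨hml', hm, ?_⟩),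
          hmx.symm⟩
        rcases hxabc with rfl | rfl | rfl
        · exact Or.inl hmx
        · exact Or.inr (Or.inl hmx)
        · exact Or.inr (Or.inr hmx)
    have edgeR0 : ∀ x : Fin 5, G.Adj z (v x) →
        ∃ u ∈ insert (v x) (M x), ∃ y ∈ insert z (∅ : Set V), G.Adj u y := by
      intro x hzx
      exact ⟨v x, Set.mem_insert _ _, z, Set.mem_insert _ _, hzx.symm⟩
    -- disjointness helper
    have disjh : ∀ (p q : V) (s t : Set V), p ≠ q → p ∉ t → q ∉ s →
        (∀ x, x ∈ s → x ∈ t → False) → Disjoint (insert p s) (insert q t) := by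
      intro p q s t h1 h2 h3 h4
      rw [Set.disjoint_left]
      rintro x (rfl | hx) hy
      · rcases hy with rfl | hy
        · exact h1 rfl
        · exact h2 hy
      · rcases hy with rfl | hy
        · exact h3 hx
        · exact h4 x hx hy
    refine hasMinor_of_stars G _
      (Sum.elim ![v a, v b, v c] ![z, v l, v l'])
      (Sum.elim ![M a, M b, M c] ![∅, A, B]) ?_ ?_ ?_
    · rintro (w | w) x hx <;> fin_cases w <;>
        simp only [Sum.elim_inl, Sum.elim_inr, Matrix.cons_val_zero, Matrix.cons_val_one,
          Matrix.head_cons, Matrix.cons_val_two, Matrix.tail_cons] at hx ⊢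
      · exact hx.1.symm
      · exact hx.1.symm
      · exact hx.1.symm
      · exact absurd hx (Set.notMem_empty x)
      · exact hx.1.symm
      · exact hx.1.symm
    have Dab : Disjoint (insert (v a) (M a)) (insert (v b) (M b)) :=
      disjh _ _ _ _ (hvne a b hab) (fun h => hMnr b _ h a rfl) (fun h => hMnr a _ h b rfl)
        (hMM a b hab (Ne.symm hla) (Ne.symm hl'a) (Ne.symm hlb) (Ne.symm hl'b))
    have Dac : Disjoint (insert (v a) (M a)) (insert (v c) (M c)) :=
      disjh _ _ _ _ (hvne a c hac) (fun h => hMnr c _ h a rfl) (fun h => hMnr a _ h c rfl)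
        (hMM a c hac (Ne.symm hla) (Ne.symm hl'a) (Ne.symm hlc) (Ne.symm hl'c))
    have Dbc : Disjoint (insert (v b) (M b)) (insert (v c) (M c)) :=
      disjh _ _ _ _ (hvne b c hbc) (fun h => hMnr c _ h b rfl) (fun h => hMnr b _ h c rfl)
        (hMM b c hbc (Ne.symm hlb) (Ne.symm hl'b) (Ne.symm hlc) (Ne.symm hl'c))
    have Daz : Disjoint (insert (v a) (M a)) (insert z (∅ : Set V)) :=
      disjh _ _ _ _ (Ne.symm (hznr a)) (Set.notMem_empty _) (hzM a)
        (fun t ht ht' => Set.notMem_empty t ht')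
    have Dbz : Disjoint (insert (v b) (M b)) (insert z (∅ : Set V)) :=
      disjh _ _ _ _ (Ne.symm (hznr b)) (Set.notMem_empty _) (hzM b)
        (fun t ht ht' => Set.notMem_empty t ht')
    have Dcz : Disjoint (insert (v c) (M c)) (insert z (∅ : Set V)) :=
      disjh _ _ _ _ (Ne.symm (hznr c)) (Set.notMem_empty _) (hzM c)
        (fun t ht ht' => Set.notMem_empty t ht')
    have Dal : Disjoint (insert (v a) (M a)) (insert (v l) A) :=
      disjh _ _ _ _ (hvne a l (Ne.symm hla)) (fun h => hAnr _ h a rfl)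
        (fun h => hMnr a _ h l rfl) (hMA a)
    have Dbl : Disjoint (insert (v b) (M b)) (insert (v l) A) :=
      disjh _ _ _ _ (hvne b l (Ne.symm hlb)) (fun h => hAnr _ h b rfl)
        (fun h => hMnr b _ h l rfl) (hMA b)
    have Dcl : Disjoint (insert (v c) (M c)) (insert (v l) A) :=
      disjh _ _ _ _ (hvne c l (Ne.symm hlc)) (fun h => hAnr _ h c rfl)
        (fun h => hMnr c _ h l rfl) (hMA c)
    have Dal' : Disjoint (insert (v a) (M a)) (insert (v l') B) :=
      disjh _ _ _ _ (hvne a l' (Ne.symm hl'a)) (fun h => hBnr _ h a rfl)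
        (fun h => hMnr a _ h l' rfl) (hMB a)
    have Dbl' : Disjoint (insert (v b) (M b)) (insert (v l') B) :=
      disjh _ _ _ _ (hvne b l' (Ne.symm hl'b)) (fun h => hBnr _ h b rfl)
        (fun h => hMnr b _ h l' rfl) (hMB b)
    have Dcl' : Disjoint (insert (v c) (M c)) (insert (v l') B) :=
      disjh _ _ _ _ (hvne c l' (Ne.symm hl'c)) (fun h => hBnr _ h c rfl)
        (fun h => hMnr c _ h l' rfl) (hMB c)
    have Dzl : Disjoint (insert z (∅ : Set V)) (insert (v l) A) :=
      disjh _ _ _ _ (hznr l) hzA (Set.notMem_empty _)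
        (fun t ht ht' => Set.notMem_empty t ht)
    have Dzl' : Disjoint (insert z (∅ : Set V)) (insert (v l') B) :=
      disjh _ _ _ _ (hznr l') hzB (Set.notMem_empty _)
        (fun t ht ht' => Set.notMem_empty t ht)
    have Dll' : Disjoint (insert (v l) A) (insert (v l') B) :=
      disjh _ _ _ _ (hvne l l' hll') (fun h => hBnr _ h l rfl) (fun h => hAnr _ h l' rfl) hAB
    · rintro (w | w) (w' | w') hne <;> fin_cases w <;> fin_cases w' <;>
        simp only [Sum.elim_inl, Sum.elim_inr, Matrix.cons_val_zero, Matrix.cons_val_one,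
          Matrix.head_cons, Matrix.cons_val_two, Matrix.tail_cons] <;>
        first
          | exact absurd rfl hne
          | exact Dab | exact Dab.symm | exact Dac | exact Dac.symm
          | exact Dbc | exact Dbc.symm | exact Daz | exact Daz.symm
          | exact Dbz | exact Dbz.symm | exact Dcz | exact Dcz.symm
          | exact Dal | exact Dal.symm | exact Dbl | exact Dbl.symm
          | exact Dcl | exact Dcl.symm | exact Dal' | exact Dal'.symm
          | exact Dbl' | exact Dbl'.symm | exact Dcl' | exact Dcl'.symm
          | exact Dzl | exact Dzl.symm | exact Dzl' | exact Dzl'.symm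
          | exact Dll' | exact Dll'.symm
    · have e0 := edgeR0 a hza
      have e1 := edgeR0 b hzb
      have e2 := edgeR0 c hzc
      have e3 := edgeR1 a hla hl'a (Or.inl rfl)
      have e4 := edgeR1 b hlb hl'b (Or.inr (Or.inl rfl))
      have e5 := edgeR1 c hlc hl'c (Or.inr (Or.inr rfl))
      have e6 := edgeR2 a hla hl'a (Or.inl rfl)
      have e7 := edgeR2 b hlb hl'b (Or.inr (Or.inl rfl))
      have e8 := edgeR2 c hlc hl'c (Or.inr (Or.inr rfl))
      have flip : ∀ (S T : Set V), (∃ u ∈ S, ∃ y ∈ T, G.Adj u y) →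
          ∃ u ∈ T, ∃ y ∈ S, G.Adj u y := by
        rintro S T ⟨u, hu, y, hy, hxy⟩
        exact ⟨y, hy, u, hu, hxy.symm⟩
      rintro (w | w) (w' | w') hadj
      · simp at hadj
      · fin_cases w <;> fin_cases w' <;>
          simp only [Sum.elim_inl, Sum.elim_inr, Matrix.cons_val_zero, Matrix.cons_val_one,
            Matrix.head_cons, Matrix.cons_val_two, Matrix.tail_cons]
        exacts [e0, e3, e6, e1, e4, e7, e2, e5, e8]
      · fin_cases w <;> fin_cases w' <;>
          simp only [Sum.elim_inl, Sum.elim_inr, Matrix.cons_val_zero, Matrix.cons_val_one,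
            Matrix.head_cons, Matrix.cons_val_two, Matrix.tail_cons]
        exacts [flip _ _ e0, flip _ _ e1, flip _ _ e2, flip _ _ e3, flip _ _ e4,
          flip _ _ e5, flip _ _ e6, flip _ _ e7, flip _ _ e8]
      · simp at hadj
  · apply hplanar.1
    set σ : V → Fin 5 := fun z => if h : ∃ x, G.Adj z (v x) then h.choose else (0 : Fin 5)
      with hσ
    have hσadj : ∀ z : V, ∀ x, G.Adj z (v x) → G.Adj z (v (σ z)) := by
      intro z x hx
      have hex : ∃ x, G.Adj z (v x) := ⟨x, hx⟩
      simp only [hσ, dif_pos hex]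
      exact hex.choose_spec
    have hcov : ∀ i j : Fin 5, i ≠ j →
        ∃ m, (∀ x, m ≠ v x) ∧ G.Adj m (v i) ∧ G.Adj m (v j) ∧ (σ m = i ∨ σ m = j) := by
      intro i j hij
      obtain ⟨m, hmi, hmj⟩ := hmid i j hij
      refine ⟨m, fun x => hnr m i hmi x, hmi, hmj, ?_⟩
      by_contra hcon
      push_neg at hcon
      exact htri ⟨m, σ m, i, j, hcon.1, hcon.2, hij, hσadj m i hmi, hmi, hmj⟩
    refine hasMinor_of_stars G _ v
      (fun i => {t | (∀ x, t ≠ v x) ∧ G.Adj t (v i) ∧ σ t = i}) ?_ ?_ ?_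
    · intro i t ht; exact ht.2.1.symm
    · intro i j hij
      rw [Set.disjoint_left]
      rintro x (rfl | hx) hy
      · rcases hy with hy | hy
        · exact hij (hv hy)
        · exact hy.1 i rfl
      · rcases hy with hy | hy
        · exact hx.1 j hy
        · exact hij (hx.2.2.symm.trans hy.2.2)
    · intro i j hij
      have hij' : i ≠ j := hij
      obtain ⟨m, hmr', hmi, hmj, hsm⟩ := hcov i j hij'
      rcases hsm with h | h
      · exact ⟨m, Set.mem_insert_iff.mpr (Or.inr ⟨hmr', hmi, h⟩), v j, Set.mem_insert _ _, hmj⟩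
      · exact ⟨v i, Set.mem_insert _ _, m, Set.mem_insert_iff.mpr (Or.inr ⟨hmr', hmj, h⟩),
          hmi.symm⟩
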